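/- Let φ_init := wht ∧ G(wht ↔ ¬shdw) ∧ G(wht → F shdw) and ψ^MFL_shadowy := φ_init ∧ G[MFL(wht) ∧ (wht ↔ MFL(shdw))]. Then for every finite word w over subsets of AP: w,0 ⊨ ψ^MFL_shadowy if and only if w is strongly shadowy. -/
import Mathlib


/- STATEMENT 16: The LTL_F+MFL formula ψ^MFL_shadowy defines exactly the strongly
shadowy words. -/

namespace MFL16

abbrev Word := List (Set ℕ)

inductive Formula where
  | atom (a : ℕ)
  | neg (φ : Formula)
  | conj (φ ψ : Formula)
  | fut (φ : Formula)
  | mfl (σ : ℕ)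

/-- Number of positions `j < i` of `w` whose label contains the letter `a`. -/
noncomputable def cnt (w : Word) (a : ℕ) (i : ℕ) : ℕ :=
  Set.ncard {j | j < i ∧ a ∈ w.getD j ∅}

def Sat (w : Word) : ℕ → Formula → Prop
  | i, .atom a => a ∈ w.getD i ∅
  | i, .neg φ => ¬ Sat w i φ
  | i, .conj φ ψ => Sat w i φ ∧ Sat w i ψ
  | i, .fut φ => ∃ j, i ≤ j ∧ j < w.length ∧ Sat w j φ
  | i, .mfl σ => ∀ τ : ℕ, cnt w τ i ≤ cnt w σ i

def fdisj (φ ψ : Formula) : Formula := .neg (.conj (.neg φ) (.neg ψ))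
def fimpl (φ ψ : Formula) : Formula := fdisj (.neg φ) ψ
def fiff (φ ψ : Formula) : Formula := .conj (fimpl φ ψ) (fimpl ψ φ)
def G (φ : Formula) : Formula := .neg (.fut (.neg φ))

/-- `φ_init := wht ∧ G(wht ↔ ¬shdw) ∧ G(wht → F shdw)`. -/
def φinit (wht shdw : ℕ) : Formula :=
  .conj (.atom wht)
    (.conj (G (fiff (.atom wht) (.neg (.atom shdw))))
           (G (fimpl (.atom wht) (.fut (.atom shdw)))))

/-- `ψ^MFL_shadowy := φ_init ∧ G[MFL(wht) ∧ (wht ↔ MFL(shdw))]`. -/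
def ψMFLshadowy (wht shdw : ℕ) : Formula :=
  .conj (φinit wht shdw)
        (G (.conj (.mfl wht) (fiff (.atom wht) (.mfl shdw))))

def Shadowy (wht shdw : ℕ) (w : Word) : Prop :=
  Even w.length ∧
  (∀ j < w.length, Even j → wht ∈ w.getD j ∅ ∧ shdw ∉ w.getD j ∅) ∧
  (∀ j < w.length, Odd j → shdw ∈ w.getD j ∅ ∧ wht ∉ w.getD j ∅)

/-- A word is strongly shadowy: it is shadowy, at every even position both `wht` and
`shdw` are among the most frequent letters in the past, and at every odd position
`wht` is among the most frequent letters in the past. -/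
def StronglyShadowy (wht shdw : ℕ) (w : Word) : Prop :=
  Shadowy wht shdw w ∧
  (∀ i < w.length, Even i → ∀ τ : ℕ, cnt w τ i ≤ cnt w wht i ∧ cnt w τ i ≤ cnt w shdw i) ∧
  (∀ i < w.length, Odd i → ∀ τ : ℕ, cnt w τ i ≤ cnt w wht i)

open Classical in
lemma cnt_eq_card (w : Word) (a i : ℕ) :
    cnt w a i = ((Finset.range i).filter (fun j => a ∈ w.getD j ∅)).card := by
  rw [cnt, ← Set.ncard_coe_finset]
  congr 1
  ext j
  simp [Finset.mem_filter, Finset.mem_range, and_comm]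

lemma cnt_zero (w : Word) (a : ℕ) : cnt w a 0 = 0 := by
  simp [cnt_eq_card]

open Classical in
lemma cnt_succ (w : Word) (a i : ℕ) :
    cnt w a (i+1) = cnt w a i + (if a ∈ w.getD i ∅ then 1 else 0) := by
  rw [cnt_eq_card, cnt_eq_card, Finset.range_add_one, Finset.filter_insert]
  split
  · rw [Finset.card_insert_of_notMem (by simp)]
  · simp

lemma cnt_of_pattern (w : Word) (wht shdw : ℕ) (i : ℕ)
    (h : ∀ j < i, (wht ∈ w.getD j ∅ ↔ Even j) ∧ (shdw ∈ w.getD j ∅ ↔ Odd j)) :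
    cnt w wht i = (i+1)/2 ∧ cnt w shdw i = i/2 := by
  induction i with
  | zero => simp [cnt_zero]
  | succ i ih =>
    obtain ⟨hwc, hsc⟩ := ih (fun j hj => h j (Nat.lt_succ_of_lt hj))
    have hi := h i (Nat.lt_succ_self i)
    rw [cnt_succ, cnt_succ, hwc, hsc]
    rcases Nat.even_or_odd i with he | ho
    · rw [if_pos (hi.1.mpr he), if_neg (fun hm => (Nat.not_odd_iff_even.mpr he) (hi.2.mp hm))]
      have := Nat.even_iff.mp he; omega
    · rw [if_neg (fun hm => (Nat.not_even_iff_odd.mpr ho) (hi.1.mp hm)), if_pos (hi.2.mpr ho)]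
      have := Nat.odd_iff.mp ho; omega

lemma sat_unfold (wht shdw : ℕ) (w : Word) :
    Sat w 0 (ψMFLshadowy wht shdw) ↔
      (wht ∈ w.getD 0 ∅ ∧
        (∀ j < w.length, (wht ∈ w.getD j ∅ ↔ shdw ∉ w.getD j ∅)) ∧
        (∀ j < w.length, wht ∈ w.getD j ∅ →
          ∃ k, j ≤ k ∧ k < w.length ∧ shdw ∈ w.getD k ∅)) ∧
      (∀ i < w.length, (∀ τ, cnt w τ i ≤ cnt w wht i) ∧
        (wht ∈ w.getD i ∅ ↔ ∀ τ, cnt w τ i ≤ cnt w shdw i)) := by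
  simp only [ψMFLshadowy, φinit, G, fiff, fimpl, fdisj, Sat]
  push_neg
  constructor
  · rintro ⟨⟨h1, h2, h3⟩, h4⟩
    refine ⟨⟨h1, ?_, ?_⟩, ?_⟩
    · intro j hj
      have := h2 j (Nat.zero_le j) hj
      tauto
    · intro j hj hwj
      have := h3 j (Nat.zero_le j) hj
      tauto
    · intro i hi
      have := h4 i (Nat.zero_le i) hi
      tauto
  · rintro ⟨⟨h1, h2, h3⟩, h4⟩
    refine ⟨⟨h1, ?_, ?_⟩, ?_⟩
    · intro j _ hj
      have := h2 j hj
      tauto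
    · intro j _ hj
      have := h3 j hj
      tauto
    · intro i _ hi
      have := h4 i hi
      tauto

theorem ψMFLshadowy_defines_stronglyShadowy (wht shdw : ℕ) (hne : wht ≠ shdw)
    (w : Word) (hw : w ≠ []) :
    Sat w 0 (ψMFLshadowy wht shdw) ↔ StronglyShadowy wht shdw w := by
  have hn : 0 < w.length := List.length_pos_iff.mpr hw
  rw [sat_unfold]
  constructor
  · rintro ⟨⟨hA, hB, hC⟩, hG⟩
    have hD : ∀ i < w.length, ∀ τ, cnt w τ i ≤ cnt w wht i := fun i hi => (hG i hi).1
    have hE : ∀ i < w.length, (wht ∈ w.getD i ∅ ↔ cnt w wht i ≤ cnt w shdw i) := by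
      intro i hi
      constructor
      · intro hwi; exact ((hG i hi).2.mp hwi) wht
      · intro hle; exact (hG i hi).2.mpr (fun τ => le_trans (hD i hi τ) hle)
    have key : ∀ i, i ≤ w.length →
        ∀ j < i, (wht ∈ w.getD j ∅ ↔ Even j) ∧ (shdw ∈ w.getD j ∅ ↔ Odd j) := by
      intro i
      induction i with
      | zero => intro _ j hj; omega
      | succ i ih =>
        intro hle j hj
        have hin : i < w.length := hle
        have ihp := ih (le_of_lt hin)
        rcases Nat.lt_succ_iff_lt_or_eq.mp hj with hj' | rfl
        · exact ihp j hj'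
        · obtain ⟨hwc, hsc⟩ := cnt_of_pattern w wht shdw j ihp
          rcases Nat.even_or_odd j with he | ho
          · have hle2 : cnt w wht j ≤ cnt w shdw j := by
              rw [hwc, hsc]; have := Nat.even_iff.mp he; omega
            have hwj : wht ∈ w.getD j ∅ := (hE j hin).mpr hle2
            have hsj : shdw ∉ w.getD j ∅ := (hB j hin).mp hwj
            exact ⟨⟨fun _ => he, fun _ => hwj⟩,
              ⟨fun hm => absurd hm hsj, fun hod => absurd he (Nat.not_even_iff_odd.mpr hod)⟩⟩
          · have hnle : ¬ cnt w wht j ≤ cnt w shdw j := by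
              rw [hwc, hsc]; have := Nat.odd_iff.mp ho; omega
            have hwj : wht ∉ w.getD j ∅ := fun hm => hnle ((hE j hin).mp hm)
            have hsj : shdw ∈ w.getD j ∅ := by
              by_contra hns; exact hwj ((hB j hin).mpr hns)
            exact ⟨⟨fun hm => absurd hm hwj, fun he => absurd ho (Nat.not_odd_iff_even.mpr he)⟩,
              ⟨fun _ => ho, fun _ => hsj⟩⟩
    have pat := key w.length le_rfl
    have hEvN : Even w.length := by
      by_contra hod
      have hod : Odd w.length := Nat.not_even_iff_odd.mp hod
      have h1 : w.length - 1 < w.length := by omega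
      have hev : Even (w.length - 1) := by
        rcases hod with ⟨k, hk⟩; exact ⟨k, by omega⟩
      have hwlast : wht ∈ w.getD (w.length - 1) ∅ := (pat _ h1).1.mpr hev
      obtain ⟨k, hk1, hk2, hk3⟩ := hC _ h1 hwlast
      have : k = w.length - 1 := by omega
      subst this
      exact Nat.not_odd_iff_even.mpr hev ((pat _ h1).2.mp hk3)
    refine ⟨⟨hEvN, ?_, ?_⟩, ?_, ?_⟩
    · intro j hj hje
      exact ⟨(pat j hj).1.mpr hje,
        fun hm => Nat.not_odd_iff_even.mpr hje ((pat j hj).2.mp hm)⟩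
    · intro j hj hjo
      exact ⟨(pat j hj).2.mpr hjo,
        fun hm => Nat.not_even_iff_odd.mpr hjo ((pat j hj).1.mp hm)⟩
    · intro i hi hie τ
      obtain ⟨hwc, hsc⟩ := cnt_of_pattern w wht shdw i (fun j hj => pat j (hj.trans hi))
      have heq : cnt w shdw i = cnt w wht i := by
        rw [hwc, hsc]; have := Nat.even_iff.mp hie; omega
      exact ⟨hD i hi τ, heq ▸ hD i hi τ⟩
    · intro i hi _ τ
      exact hD i hi τ
  · rintro ⟨⟨hEvN, hEvPos, hOdPos⟩, hEC, hOC⟩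
    have pat : ∀ j < w.length,
        (wht ∈ w.getD j ∅ ↔ Even j) ∧ (shdw ∈ w.getD j ∅ ↔ Odd j) := by
      intro j hj
      rcases Nat.even_or_odd j with he | ho
      · obtain ⟨h1, h2⟩ := hEvPos j hj he
        exact ⟨⟨fun _ => he, fun _ => h1⟩,
          ⟨fun hm => absurd hm h2, fun hod => absurd he (Nat.not_even_iff_odd.mpr hod)⟩⟩
      · obtain ⟨h1, h2⟩ := hOdPos j hj ho
        exact ⟨⟨fun hm => absurd hm h2, fun he => absurd ho (Nat.not_odd_iff_even.mpr he)⟩,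
          ⟨fun _ => ho, fun _ => h1⟩⟩
    refine ⟨⟨?_, ?_, ?_⟩, ?_⟩
    · exact (pat 0 hn).1.mpr Even.zero
    · intro j hj
      rcases Nat.even_or_odd j with he | ho
      · obtain ⟨h1, h2⟩ := hEvPos j hj he
        exact ⟨fun _ => h2, fun _ => h1⟩
      · obtain ⟨h1, h2⟩ := hOdPos j hj ho
        exact ⟨fun hm => absurd hm h2, fun hns => absurd h1 hns⟩
    · intro j hj hwj
      have hje : Even j := (pat j hj).1.mp hwj
      have hj1 : j + 1 < w.length := by
        have h1 := Nat.even_iff.mp hje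
        have h2 := Nat.even_iff.mp hEvN
        omega
      exact ⟨j + 1, Nat.le_succ j, hj1,
        (pat (j+1) hj1).2.mpr (Even.add_one hje)⟩
    · intro i hi
      obtain ⟨hwc, hsc⟩ := cnt_of_pattern w wht shdw i (fun j hj => pat j (hj.trans hi))
      rcases Nat.even_or_odd i with he | ho
      · exact ⟨fun τ => (hEC i hi he τ).1,
          ⟨fun _ τ => (hEC i hi he τ).2, fun _ => (pat i hi).1.mpr he⟩⟩
      · refine ⟨fun τ => hOC i hi ho τ, ?_⟩
        constructor
        · intro hm; exact absurd (( pat i hi).1.mp hm) (Nat.not_even_iff_odd.mpr ho)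
        · intro hall
          exfalso
          have := hall wht
          rw [hwc, hsc] at this
          have := Nat.odd_iff.mp ho
          omega

end MFL16
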